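/- Let L, q ≥ 1 with qL ≥ 2, and let H be an L×q real matrix all of whose entries are nonzero. Define the (qL)×(qL) real matrix G, with rows and columns indexed by pairs (i,k) ∈ {1,…,q}×{1,…,L}, by G((i,k),(j,l)) = H_{k,i}·H_{l,j} whenever (i,k) ≠ (j,l), and G((i,k),(i,k)) = 0 for all diagonal positions. Then det(G) ≠ 0, i.e. G is invertible. -/

import Mathlib

/-- Let `L, q ≥ 1` with `qL ≥ 2` and let `H` be an `L × q` real matrix with
all entries nonzero. The `(qL) × (qL)` matrix `G`, indexed by pairs `(i,k) ∈ {1,…,q}×{1,…,L}`,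
with `G((i,k),(j,l)) = H_{k,i}·H_{l,j}` off the diagonal and `0` on the diagonal, has nonzero
determinant. -/
theorem det_offdiag_rank_one_blocks_ne_zero
    (L q : ℕ) (hL : 1 ≤ L) (hq : 1 ≤ q) (hqL : 2 ≤ q * L)
    (H : Matrix (Fin L) (Fin q) ℝ) (hH : ∀ k i, H k i ≠ 0) :
    (Matrix.of fun p p' : Fin q × Fin L =>
      if p = p' then (0 : ℝ) else H p.2 p.1 * H p'.2 p'.1).det ≠ 0 := by
  set v : Fin q × Fin L → ℝ := fun p => H p.2 p.1 with hv
  have hvne : ∀ p, v p ≠ 0 := fun p => hH p.2 p.1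
  have hGeq : (Matrix.of fun p p' : Fin q × Fin L =>
      if p = p' then (0 : ℝ) else H p.2 p.1 * H p'.2 p'.1)
      = Matrix.diagonal (fun p => -(v p * v p)) + Matrix.replicateCol Unit v * Matrix.replicateRow Unit v := by
    ext p p'
    by_cases h : p = p'
    · subst h
      simp [Matrix.mul_apply, Matrix.diagonal]
    · simp [Matrix.mul_apply, Matrix.diagonal, h, hv]
  rw [hGeq]
  have hdetA : (Matrix.diagonal (fun p : Fin q × Fin L => -(v p * v p))).det
      = ∏ p : Fin q × Fin L, -(v p * v p) := Matrix.det_diagonal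
  have hdetAne : (Matrix.diagonal (fun p : Fin q × Fin L => -(v p * v p))).det ≠ 0 := by
    rw [hdetA]
    exact Finset.prod_ne_zero_iff.2 fun p _ => by
      simpa using mul_ne_zero (hvne p) (hvne p)
  rw [Matrix.det_add_replicateCol_mul_replicateRow (isUnit_iff_ne_zero.2 hdetAne) v v]
  refine mul_ne_zero hdetAne ?_
  have hinv : (Matrix.diagonal (fun p : Fin q × Fin L => -(v p * v p)))⁻¹
      = Matrix.diagonal (fun p => (-(v p * v p))⁻¹) := by
    apply Matrix.inv_eq_right_inv
    rw [Matrix.diagonal_mul_diagonal]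
    convert Matrix.diagonal_one with p
    exact mul_inv_cancel₀ (by simpa using mul_ne_zero (hvne p) (hvne p))
  rw [hinv, Matrix.det_unique]
  have hentry : (Matrix.replicateRow Unit v * Matrix.diagonal (fun p => (-(v p * v p))⁻¹)
      * Matrix.replicateCol Unit v) default default
      = ∑ p : Fin q × Fin L, (-1 : ℝ) := by
    rw [Matrix.mul_assoc, Matrix.mul_apply]
    refine Finset.sum_congr rfl fun p _ => ?_
    rw [Matrix.diagonal_mul]
    have := hvne p
    simp only [Matrix.replicateRow_apply, Matrix.replicateCol_apply]
    field_simp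
  rw [Matrix.add_apply, hentry, Matrix.one_apply_eq]
  simp only [Finset.sum_const, Finset.card_univ, Fintype.card_prod, Fintype.card_fin,
    nsmul_eq_mul, mul_neg, mul_one]
  have : (2 : ℝ) ≤ (q * L : ℕ) := by exact_mod_cast hqL
  push_cast at this ⊢
  linarith
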